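/- For any submodule S ≤ M n, the F₂-dimension of the concatenated binary code Ĉ(S) equals n plus the F₂-dimension of S: finrank Ĉ(S) = n + finrank S. (Hence if dim S = n − k, then dim Ĉ(S) = 2n − k, so the self-dual CSS code with X- and Z-checks both given by Ĉ(S) encodes 4n − 2(2n−k) = 2k logical qubits.) -/
import Mathlib


/-- Binary symplectic representation of `n`-qubit Pauli operators (up to phase). -/
abbrev M (n : ℕ) : Type := Fin n → ZMod 2 × ZMod 2

/-- The symplectic form: two Paulis commute iff it vanishes. -/
def symp {n : ℕ} (u v : M n) : ZMod 2 :=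
  ∑ j, ((u j).1 * (v j).2 + (u j).2 * (v j).1)

/-- The inner `[[4,2,2]]` encoding of one qubit-pair symplectic entry. -/
def Emap (p : ZMod 2 × ZMod 2) : Fin 4 → ZMod 2 := ![p.1 + p.2, p.1, p.2, 0]

/-- Blockwise `[[4,2,2]]` encoding. -/
def Ehat {n : ℕ} (v : M n) : Fin n → Fin 4 → ZMod 2 := fun j => Emap (v j)

/-- The indicator vector of block `j` (the inner `XXXX`/`ZZZZ` stabilizer). -/
def beta {n : ℕ} (j : Fin n) : Fin n → Fin 4 → ZMod 2 :=
  fun j' _ => if j' = j then 1 else 0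

/-- The concatenated binary code `Ĉ(S)`. -/
def Chat {n : ℕ} (S : Submodule (ZMod 2) (M n)) :
    Submodule (ZMod 2) (Fin n → Fin 4 → ZMod 2) :=
  Submodule.span (ZMod 2) (Set.range (beta (n := n)) ∪ Ehat '' (S : Set (M n)))

/-- The standard dot product on the concatenated space. -/
def dotB {n : ℕ} (w w' : Fin n → Fin 4 → ZMod 2) : ZMod 2 :=
  ∑ j, ∑ i, w j i * w' j i

def EhatL {n : ℕ} : M n →ₗ[ZMod 2] (Fin n → Fin 4 → ZMod 2) where
  toFun := Ehat
  map_add' u v := by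
    funext j i
    fin_cases i <;> simp [Ehat, Emap] <;> ring
  map_smul' c u := by
    funext j i
    fin_cases i <;> simp [Ehat, Emap] <;> ring

lemma Ehat_inj {n : ℕ} : Function.Injective (EhatL (n := n)) := by
  intro u v h
  funext j
  have h1 := congrFun (congrFun h j) 1
  have h2 := congrFun (congrFun h j) 2
  simp [EhatL, Ehat, Emap] at h1 h2
  exact Prod.ext h1 h2

lemma beta_li {n : ℕ} : LinearIndependent (ZMod 2) (beta (n := n)) := by
  rw [Fintype.linearIndependent_iff]
  intro c hc j
  have := congrFun (congrFun hc j) 3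
  simpa [beta, Finset.sum_apply, Finset.sum_ite_eq'] using this

theorem stmt3 (n : ℕ) (S : Submodule (ZMod 2) (M n)) :
    Module.finrank (ZMod 2) (Chat S) = n + Module.finrank (ZMod 2) S := by
  have hChat : Chat S =
      Submodule.span (ZMod 2) (Set.range (beta (n := n))) ⊔ Submodule.map EhatL S := by
    rw [Chat, Submodule.span_union]
    congr 1
    rw [show Ehat '' (S : Set (M n)) = EhatL '' (S : Set (M n)) from rfl,
      Submodule.span_image, Submodule.span_eq]
  have hdisj : Disjoint (Submodule.span (ZMod 2) (Set.range (beta (n := n))))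
      (Submodule.map EhatL S) := by
    rw [Submodule.disjoint_def]
    intro x hx1 hx2
    obtain ⟨c, hc⟩ := Submodule.mem_span_range_iff_exists_fun (ZMod 2) |>.mp hx1
    obtain ⟨v, _, hv⟩ := hx2
    have hc0 : ∀ j, c j = 0 := by
      intro j
      have h3 : x j 3 = 0 := by rw [← hv]; rfl
      have h4 : x j 3 = c j := by
        rw [← hc]
        simp [beta, Finset.sum_apply, Finset.sum_ite_eq']
      rw [h4] at h3; exact h3
    rw [← hc]
    simp [hc0]
  have hfr := Submodule.finrank_sup_add_finrank_inf_eq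
    (Submodule.span (ZMod 2) (Set.range (beta (n := n)))) (Submodule.map EhatL S)
  rw [hdisj.eq_bot] at hfr
  simp only [finrank_bot, add_zero] at hfr
  have h1 : Module.finrank (ZMod 2) (Submodule.span (ZMod 2) (Set.range (beta (n := n)))) = n := by
    rw [finrank_span_eq_card beta_li, Fintype.card_fin]
  have h2 : Module.finrank (ZMod 2) (Submodule.map (EhatL (n := n)) S)
      = Module.finrank (ZMod 2) S :=
    (Submodule.equivMapOfInjective EhatL Ehat_inj S).finrank_eq.symm
  rw [hChat, hfr, h1, h2]
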